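/- A subset A ⊆ {1,…,2n} is a circuit of the Catalan matroid C_n if and only if A = {2k, 2k + b_1, …, 2k + b_{n−k}} for some positive integer k ≤ n and some Dyck path {b_1, …, b_{n−k}} of length 2(n−k). -/
import Mathlib


/-- Height of the path with up-step set `A` after `x` steps: `2·|A ∩ {1,…,x}| − x`. -/
def ht (A : Finset ℕ) (x : ℕ) : ℤ := 2 * (A ∩ Finset.Icc 1 x).card - x

/-- `P` is the up-step set of a Dyck path of length `2n`. -/
def IsDyck (n : ℕ) (P : Finset ℕ) : Prop :=
  P ⊆ Finset.Icc 1 (2 * n) ∧ P.card = n ∧ ∀ x ≤ 2 * n, 0 ≤ ht P x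

/-- `A` is independent in the Catalan matroid: it is contained in some basis. -/
def CatalanIndep (n : ℕ) (A : Finset ℕ) : Prop :=
  ∃ B : Finset ℕ, IsDyck n B ∧ A ⊆ B

/-- `A` is a circuit of the Catalan matroid: a minimal dependent subset of the ground set. -/
def IsCatalanCircuit (n : ℕ) (A : Finset ℕ) : Prop :=
  A ⊆ Finset.Icc 1 (2 * n) ∧ ¬ CatalanIndep n A ∧ ∀ A' ⊂ A, CatalanIndep n A'

open Finset

lemma inter_Icc_eq_empty {A : Finset ℕ} {x : ℕ} (h : ∀ a ∈ A, x < a) :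
    A ∩ Finset.Icc 1 x = ∅ := by
  ext z
  simp only [mem_inter, mem_Icc, notMem_empty, iff_false, not_and]
  intro hz h1 h2
  have := h z hz
  omega

lemma card_inter_mono {A B I : Finset ℕ} (h : A ⊆ B) :
    (B ∩ I).card ≤ (A ∩ I).card + (B.card - A.card) := by
  have hsub : B ∩ I ⊆ (A ∩ I) ∪ (B \ A) := by
    intro x hx
    simp only [mem_inter] at hx
    by_cases hxa : x ∈ A
    · exact mem_union_left _ (mem_inter.2 ⟨hxa, hx.2⟩)
    · exact mem_union_right _ (mem_sdiff.2 ⟨hx.1, hxa⟩)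
  calc (B ∩ I).card ≤ ((A ∩ I) ∪ (B \ A)).card := card_le_card hsub
    _ ≤ (A ∩ I).card + (B \ A).card := card_union_le _ _
    _ = (A ∩ I).card + (B.card - A.card) := by rw [card_sdiff_of_subset h]

lemma catalan_extend (n : ℕ) : ∀ d (A : Finset ℕ), A ⊆ Finset.Icc 1 (2*n) →
    A.card + d = n → (∀ x ≤ 2*n, 2*(A.card:ℤ) - 2*n ≤ ht A x) →
    ∃ B, IsDyck n B ∧ A ⊆ B := by
  intro d
  induction d with
  | zero =>
    intro A hsub hcard hht
    refine ⟨A, ⟨hsub, by omega, fun x hx => ?_⟩, subset_rfl⟩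
    have := hht x hx
    omega
  | succ d ih =>
    intro A hsub hcard hht
    have hne : (Finset.Icc 1 (2*n) \ A).Nonempty := by
      rw [sdiff_nonempty]
      intro hcon
      have := card_le_card hcon
      rw [Nat.card_Icc] at this
      omega
    set e := (Finset.Icc 1 (2*n) \ A).min' hne with he
    have heMem : e ∈ Finset.Icc 1 (2*n) \ A := min'_mem _ _
    have heIcc : e ∈ Finset.Icc 1 (2*n) := (mem_sdiff.1 heMem).1
    have heA : e ∉ A := (mem_sdiff.1 heMem).2
    have heMin : ∀ y ∈ Finset.Icc 1 (2*n) \ A, e ≤ y := fun y => min'_le _ _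
    have hcard' : (insert e A).card = A.card + 1 := card_insert_of_notMem heA
    have hcond : ∀ x ≤ 2*n, 2*((insert e A).card:ℤ) - 2*n ≤ ht (insert e A) x := by
      intro x hx
      by_cases hex : e ≤ x
      · have hins : (insert e A) ∩ Finset.Icc 1 x = insert e (A ∩ Finset.Icc 1 x) := by
          apply insert_inter_of_mem
          rw [mem_Icc]
          rw [mem_Icc] at heIcc
          omega
        have hnotin : e ∉ A ∩ Finset.Icc 1 x := fun hcon => heA (mem_inter.1 hcon).1
        have := hht x hx
        unfold ht at *
        rw [hins, card_insert_of_notMem hnotin]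
        push_cast
        omega
      · have hIccA : Finset.Icc 1 x ⊆ A := by
          intro y hy
          by_contra hyA
          have hy2n : y ∈ Finset.Icc 1 (2*n) := by
            rw [mem_Icc] at hy ⊢
            omega
          have := heMin y (mem_sdiff.2 ⟨hy2n, hyA⟩)
          rw [mem_Icc] at hy
          omega
        have hins : (insert e A) ∩ Finset.Icc 1 x = Finset.Icc 1 x := by
          apply inter_eq_right.2
          exact hIccA.trans (subset_insert _ _)
        unfold ht
        rw [hins, Nat.card_Icc]
        omega
    obtain ⟨B, hB, hBsub⟩ := ih (insert e A) (insert_subset heIcc hsub) (by omega) hcond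
    exact ⟨B, hB, (subset_insert e A).trans hBsub⟩

lemma catalanIndep_iff (n : ℕ) (A : Finset ℕ) :
    CatalanIndep n A ↔ A ⊆ Finset.Icc 1 (2*n) ∧ A.card ≤ n ∧
      ∀ x ≤ 2*n, 2*(A.card:ℤ) - 2*n ≤ ht A x := by
  constructor
  · rintro ⟨B, ⟨hBsub, hBcard, hBht⟩, hAB⟩
    have hcardle : A.card ≤ n := hBcard ▸ card_le_card hAB
    refine ⟨hAB.trans hBsub, hcardle, fun x hx => ?_⟩
    have h1 := card_inter_mono (I := Finset.Icc 1 x) hAB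
    have h2 := hBht x hx
    have h3 : A.card ≤ B.card := card_le_card hAB
    unfold ht at *
    omega
  · rintro ⟨h1, h2, h3⟩
    exact catalan_extend n (n - A.card) A h1 (by omega) h3

/-- The circuits of the Catalan matroid are the sets `{2k, 2k + b_1, …, 2k + b_{n−k}}`
for a positive integer `k ≤ n` and a Dyck path `{b_1, …, b_{n−k}}` of length `2(n−k)`. -/
theorem catalan_circuits (n : ℕ) (hn : 0 < n) (A : Finset ℕ)
    (hA : A ⊆ Finset.Icc 1 (2 * n)) :
    IsCatalanCircuit n A ↔
      ∃ k : ℕ, 0 < k ∧ k ≤ n ∧ ∃ b : Finset ℕ, IsDyck (n - k) b ∧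
        A = insert (2 * k) (b.image (fun x => 2 * k + x)) := by
  constructor
  · rintro ⟨hsub, hdep, hmin⟩
    -- A is nonempty
    have hne : A.Nonempty := by
      rcases A.eq_empty_or_nonempty with rfl | h
      · exfalso
        apply hdep
        apply (catalanIndep_iff n ∅).2
        refine ⟨empty_subset _, by simp, fun x hx => ?_⟩
        unfold ht
        simp only [empty_inter, card_empty]
        omega
      · exact h
    have hApos : 1 ≤ A.card := card_pos.2 hne
    -- A has at most n elements
    have hcardle : A.card ≤ n := by
      by_contra hgt
      push_neg at hgt
      have key : ∀ a ∈ A, 1 ∈ A.erase a := by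
        intro a ha
        obtain ⟨B, hB, hAB⟩ := hmin (A.erase a) (erase_ssubset ha)
        have hcB : B.card = n := hB.2.1
        have hcerase : (A.erase a).card = A.card - 1 := card_erase_of_mem ha
        have hle := card_le_card hAB
        have heq : A.erase a = B := eq_of_subset_of_card_le hAB (by omega)
        have h1B : 1 ∈ B := by
          by_contra h1n
          have hBe : B ∩ Finset.Icc 1 1 = ∅ :=
            inter_Icc_eq_empty (fun z hz => by
              rcases Nat.lt_or_ge 1 z with h | h
              · exact h
              · interval_cases z
                · exact absurd (hB.1 hz) (by simp)
                · exact absurd hz h1n)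
          have := hB.2.2 1 (by omega)
          unfold ht at this
          rw [hBe] at this
          simp at this
        rw [heq]
        exact h1B
      obtain ⟨a, ha⟩ := hne
      have h1A : 1 ∈ A := mem_of_mem_erase (key a ha)
      have := key 1 h1A
      simp at this
    -- the minimum element
    set a₁ := A.min' hne with ha₁def
    have ha₁A : a₁ ∈ A := min'_mem _ _
    have ha₁min : ∀ a ∈ A, a₁ ≤ a := fun a => min'_le _ _
    have ha₁Icc := mem_Icc.1 (hsub ha₁A)
    obtain ⟨hsub', hcard', hcond'⟩ :=
      (catalanIndep_iff n (A.erase a₁)).1 (hmin (A.erase a₁) (erase_ssubset ha₁A))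
    have hcardA' : (A.erase a₁).card = A.card - 1 := card_erase_of_mem ha₁A
    -- a violation point exists
    have hviol : ∃ x, x ≤ 2*n ∧ ht A x < 2*(A.card:ℤ) - 2*n := by
      by_contra h
      push_neg at h
      exact hdep ((catalanIndep_iff n A).2 ⟨hsub, hcardle, fun x hx => h x hx⟩)
    obtain ⟨x₀, hx₀le, hx₀⟩ := hviol
    have hx₀lt : x₀ < a₁ := by
      by_contra hge
      push_neg at hge
      have hins : A ∩ Finset.Icc 1 x₀ = insert a₁ ((A.erase a₁) ∩ Finset.Icc 1 x₀) := by
        ext z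
        simp only [mem_inter, mem_insert, mem_erase, mem_Icc]
        constructor
        · rintro ⟨hzA, h1, h2⟩
          by_cases hz : z = a₁
          · exact Or.inl hz
          · exact Or.inr ⟨⟨hz, hzA⟩, h1, h2⟩
        · rintro (rfl | ⟨⟨-, hzA⟩, h1, h2⟩)
          · exact ⟨ha₁A, by omega, hge⟩
          · exact ⟨hzA, h1, h2⟩
      have hnotin : a₁ ∉ (A.erase a₁) ∩ Finset.Icc 1 x₀ := by
        intro hcon
        exact (mem_erase.1 (mem_inter.1 hcon).1).1 rfl
      have hc' := hcond' x₀ hx₀le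
      unfold ht at hx₀ hc'
      rw [hins, card_insert_of_notMem hnotin] at hx₀
      push_cast at hx₀
      omega
    have hAe : A ∩ Finset.Icc 1 x₀ = ∅ :=
      inter_Icc_eq_empty (fun a ha => lt_of_lt_of_le hx₀lt (ha₁min a ha))
    have ha₁ge : 2*(n - A.card) + 2 ≤ a₁ := by
      unfold ht at hx₀
      rw [hAe] at hx₀
      simp only [card_empty] at hx₀
      omega
    by_cases hr1 : A.card = 1
    · -- singleton case: A = {2n}
      have ha₁eq : a₁ = 2*n := by omega
      refine ⟨n, hn, le_refl n, ∅, ⟨empty_subset _, by simp, fun x hx => ?_⟩, ?_⟩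
      · unfold ht
        simp only [empty_inter, card_empty]
        omega
      · obtain ⟨a, haeq⟩ := card_eq_one.1 hr1
        have : a₁ = a := by
          have := ha₁A
          rw [haeq, mem_singleton] at this
          exact this
        rw [haeq, ← this, ha₁eq]
        simp
    · -- the main case: A.card ≥ 2
      have hr2 : 2 ≤ A.card := by omega
      have hne' : (A.erase a₁).Nonempty := card_pos.1 (by omega)
      set a₂ := (A.erase a₁).min' hne' with ha₂def
      have ha₂ : a₂ ∈ A.erase a₁ := min'_mem _ _
      have ha₂min : ∀ a ∈ A.erase a₁, a₂ ≤ a := fun a => min'_le _ _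
      have ha₂A : a₂ ∈ A := mem_of_mem_erase ha₂
      have ha₁lta₂ : a₁ < a₂ :=
        lt_of_le_of_ne (ha₁min _ ha₂A) (Ne.symm (mem_erase.1 ha₂).1)
      have ha₂2n : a₂ ≤ 2*n := (mem_Icc.1 (hsub ha₂A)).2
      have hcond₂ := hcond' (a₂ - 1) (by omega)
      have hempty₂ : (A.erase a₁) ∩ Finset.Icc 1 (a₂ - 1) = ∅ :=
        inter_Icc_eq_empty (fun a ha => by have := ha₂min a ha; omega)
      have ha₂le : a₂ ≤ 2*(n - A.card) + 3 := by
        unfold ht at hcond₂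
        rw [hempty₂] at hcond₂
        simp only [card_empty] at hcond₂
        omega
      have ha₁eq : a₁ = 2*(n - A.card) + 2 := by omega
      set k := n - A.card + 1 with hkdef
      have hkn : k ≤ n := by omega
      have ha₁k : a₁ = 2*k := by omega
      have hnk : n - k = A.card - 1 := by omega
      have hAge : ∀ a ∈ A.erase a₁, 2*k + 1 ≤ a := by
        intro a ha
        have := ha₂min a ha
        omega
      refine ⟨k, by omega, hkn, (A.erase a₁).image (fun t => t - 2*k), ⟨?_, ?_, ?_⟩, ?_⟩
      · intro z hz
        obtain ⟨t, ht, rfl⟩ := mem_image.1 hz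
        have h1 := hAge t ht
        have h2 := (mem_Icc.1 (hsub (mem_of_mem_erase ht))).2
        rw [mem_Icc]
        omega
      · rw [card_image_of_injOn, hcardA', hnk]
        intro u hu v hv huv
        have huv' : u - 2*k = v - 2*k := huv
        have := hAge u hu
        have := hAge v hv
        omega
      · intro y hy
        have himg : ((A.erase a₁).image (fun t => t - 2*k)) ∩ Finset.Icc 1 y
            = ((A.erase a₁) ∩ Finset.Icc 1 (2*k + y)).image (fun t => t - 2*k) := by
          ext z
          simp only [mem_inter, mem_image, mem_Icc]
          constructor
          · rintro ⟨⟨t, ht, rfl⟩, h1, h2⟩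
            have := hAge t ht
            exact ⟨t, ⟨ht, by omega, by omega⟩, rfl⟩
          · rintro ⟨t, ⟨ht, h1, h2⟩, rfl⟩
            have := hAge t ht
            exact ⟨⟨t, ht, rfl⟩, by omega, by omega⟩
        have hcond₃ := hcond' (2*k + y) (by omega)
        have hcimg : (((A.erase a₁) ∩ Finset.Icc 1 (2*k + y)).image (fun t => t - 2*k)).card
            = ((A.erase a₁) ∩ Finset.Icc 1 (2*k + y)).card := by
          apply card_image_of_injOn
          intro u hu v hv huv
          have huv' : u - 2*k = v - 2*k := huv
          have := hAge u (mem_inter.1 hu).1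
          have := hAge v (mem_inter.1 hv).1
          omega
        unfold ht at hcond₃ ⊢
        rw [himg, hcimg]
        omega
      · rw [Finset.image_image]
        have himid : (A.erase a₁).image ((fun x => 2*k + x) ∘ (fun t => t - 2*k))
            = A.erase a₁ := by
          rw [Finset.image_congr (g := id) (fun t ht => by
            have := hAge t ht
            simp only [Function.comp_apply, id_eq]
            omega), Finset.image_id]
        rw [himid, ← ha₁k, insert_erase ha₁A]
  · rintro ⟨k, hk0, hkn, b, ⟨hbsub, hbcard, hbht⟩, hAeq⟩
    have hb1 : ∀ t ∈ b, 1 ≤ t := fun t ht => (mem_Icc.1 (hbsub ht)).1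
    have hb2 : ∀ t ∈ b, t ≤ 2*(n-k) := fun t ht => (mem_Icc.1 (hbsub ht)).2
    have hmemA : ∀ a ∈ A, 2*k ≤ a := by
      intro a ha
      rw [hAeq, mem_insert] at ha
      rcases ha with rfl | ha
      · omega
      · obtain ⟨t, ht, rfl⟩ := mem_image.1 ha
        omega
    have h2knotimg : 2*k ∉ b.image (fun x => 2*k + x) := by
      intro hcon
      obtain ⟨t, ht, hteq⟩ := mem_image.1 hcon
      have := hb1 t ht
      omega
    have hcardA : A.card = (n - k) + 1 := by
      rw [hAeq, card_insert_of_notMem h2knotimg,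
        card_image_of_injective _ (add_right_injective (2*k)),
        hbcard]
    -- key height computation for x ≥ 2k
    have hhtA : ∀ x, 2*k ≤ x → x ≤ 2*n →
        (A ∩ Finset.Icc 1 x).card = (b ∩ Finset.Icc 1 (x - 2*k)).card + 1 := by
      intro x h2kx hx2n
      have himg : (b.image (fun t => 2*k + t)) ∩ Finset.Icc 1 x
          = (b ∩ Finset.Icc 1 (x - 2*k)).image (fun t => 2*k + t) := by
        ext z
        simp only [mem_inter, mem_image, mem_Icc]
        constructor
        · rintro ⟨⟨t, ht, rfl⟩, h1, h2⟩
          exact ⟨t, ⟨ht, hb1 t ht, by omega⟩, rfl⟩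
        · rintro ⟨t, ⟨ht, h1, h2⟩, rfl⟩
          exact ⟨⟨t, ht, rfl⟩, by omega, by omega⟩
      have hins : A ∩ Finset.Icc 1 x
          = insert (2*k) ((b.image (fun t => 2*k + t)) ∩ Finset.Icc 1 x) := by
        rw [hAeq]
        exact insert_inter_of_mem (mem_Icc.2 ⟨by omega, h2kx⟩)
      rw [hins, himg, card_insert_of_notMem, card_image_of_injective _
        (add_right_injective (2*k))]
      intro hcon
      obtain ⟨t, ht, hteq⟩ := mem_image.1 hcon
      have := hb1 t (mem_inter.1 ht).1
      omega
    refine ⟨hA, ?_, ?_⟩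
    · intro hindep
      obtain ⟨-, hcardle, hcond⟩ := (catalanIndep_iff n A).1 hindep
      have h1 := hcond (2*k - 1) (by omega)
      have h2 : A ∩ Finset.Icc 1 (2*k-1) = ∅ :=
        inter_Icc_eq_empty (fun a ha => by have := hmemA a ha; omega)
      unfold ht at h1
      rw [h2] at h1
      simp only [card_empty] at h1
      omega
    · intro A' hA'
      apply (catalanIndep_iff n A').2
      have hsubA : A' ⊆ A := hA'.subset
      have hc : A'.card < A.card := card_lt_card hA'
      refine ⟨hsubA.trans hA, by omega, ?_⟩
      intro x hx
      by_cases hxk : x < 2*k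
      · have h2 : A' ∩ Finset.Icc 1 x = ∅ :=
          inter_Icc_eq_empty (fun a ha => by have := hmemA a (hsubA ha); omega)
        unfold ht
        rw [h2]
        simp only [card_empty]
        omega
      · have h1 := hhtA x (by omega) hx
        have h2 := hbht (x - 2*k) (by omega)
        have h3 := card_inter_mono (I := Finset.Icc 1 x) hsubA
        unfold ht at *
        omega
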